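/- Every connected filtered bialgebra is a Hopf algebra: if A is a bialgebra over a field k equipped with a connected increasing filtration, then there exists a linear map S : A → A (an antipode) with S ∗ id = η∘ε = id ∗ S, where η : k → A is λ ↦ λ·1. -/

import Mathlib

open TensorProduct LinearMap

namespace ConnFilt

variable {k A : Type*} [CommSemiring k] [Semiring A] [Bialgebra k A]

/-- Convolution product on `End_k(A)`. -/
noncomputable def conv (f g : A →ₗ[k] A) : A →ₗ[k] A :=
  LinearMap.mul' k A ∘ₗ TensorProduct.map f g ∘ₗ Coalgebra.comul

/-- The convolution unit `η ∘ ε`. -/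
noncomputable def e : A →ₗ[k] A := Algebra.linearMap k A ∘ₗ Coalgebra.counit

lemma conv_e_left (f : A →ₗ[k] A) : conv e f = f := by
  have h1 : TensorProduct.map (Algebra.linearMap k A ∘ₗ Coalgebra.counit) f
      = TensorProduct.map (Algebra.linearMap k A) f ∘ₗ
        (Coalgebra.counit (R := k) (A := A)).rTensor A := by
    rw [rTensor, ← TensorProduct.map_comp, LinearMap.comp_id]
  rw [conv, e, h1]
  ext x
  rw [LinearMap.comp_apply, LinearMap.comp_apply, LinearMap.comp_apply,
    Coalgebra.rTensor_counit_comul]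
  simp

lemma conv_e_right (f : A →ₗ[k] A) : conv f e = f := by
  have h1 : TensorProduct.map f (Algebra.linearMap k A ∘ₗ Coalgebra.counit)
      = TensorProduct.map f (Algebra.linearMap k A) ∘ₗ
        (Coalgebra.counit (R := k) (A := A)).lTensor A := by
    rw [lTensor, ← TensorProduct.map_comp, LinearMap.comp_id]
  rw [conv, e, h1]
  ext x
  rw [LinearMap.comp_apply, LinearMap.comp_apply, LinearMap.comp_apply,
    Coalgebra.lTensor_counit_comul]
  simp

lemma conv_add_left (f g h : A →ₗ[k] A) : conv (f + g) h = conv f h + conv g h := by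
  rw [conv, conv, conv, TensorProduct.map_add_left, LinearMap.add_comp, LinearMap.comp_add]

lemma conv_add_right (f g h : A →ₗ[k] A) : conv f (g + h) = conv f g + conv f h := by
  rw [conv, conv, conv, TensorProduct.map_add_right, LinearMap.add_comp, LinearMap.comp_add]

lemma conv_smul_left (c : k) (f g : A →ₗ[k] A) : conv (c • f) g = c • conv f g := by
  rw [conv, conv, TensorProduct.map_smul_left, LinearMap.smul_comp, LinearMap.comp_smul]

lemma conv_smul_right (c : k) (f g : A →ₗ[k] A) : conv f (c • g) = c • conv f g := by
  rw [conv, conv, TensorProduct.map_smul_right, LinearMap.smul_comp, LinearMap.comp_smul]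

lemma conv_assoc (f g h : A →ₗ[k] A) : conv (conv f g) h = conv f (conv g h) := by
  have mulassoc : (LinearMap.mul' k A) ∘ₗ TensorProduct.map (LinearMap.mul' k A) LinearMap.id
      = (LinearMap.mul' k A) ∘ₗ TensorProduct.map LinearMap.id (LinearMap.mul' k A)
        ∘ₗ (TensorProduct.assoc k A A A : _ →ₗ[k] _) := by
    apply TensorProduct.ext_threefold
    intro x y z
    simp [mul_assoc]
  have hA : TensorProduct.map (conv f g) h
      = TensorProduct.map (LinearMap.mul' k A) LinearMap.id ∘ₗ
        TensorProduct.map (TensorProduct.map f g ∘ₗ Coalgebra.comul) h := by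
    rw [conv, ← TensorProduct.map_comp, LinearMap.id_comp]
  have hB : TensorProduct.map (TensorProduct.map f g ∘ₗ (Coalgebra.comul (R := k))) h
      = TensorProduct.map (TensorProduct.map f g) h ∘ₗ
        (Coalgebra.comul (R := k) (A := A)).rTensor A := by
    rw [rTensor, ← TensorProduct.map_comp, LinearMap.comp_id]
  have hC : TensorProduct.map f (conv g h)
      = TensorProduct.map LinearMap.id (LinearMap.mul' k A) ∘ₗ
        TensorProduct.map f (TensorProduct.map g h ∘ₗ Coalgebra.comul) := by
    rw [conv, ← TensorProduct.map_comp, LinearMap.id_comp]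
  have hD : TensorProduct.map f (TensorProduct.map g h ∘ₗ (Coalgebra.comul (R := k))) 
      = TensorProduct.map f (TensorProduct.map g h) ∘ₗ
        (Coalgebra.comul (R := k) (A := A)).lTensor A := by
    rw [lTensor, ← TensorProduct.map_comp, LinearMap.comp_id]
  have el : conv (conv f g) h
      = LinearMap.mul' k A ∘ₗ TensorProduct.map (conv f g) h ∘ₗ Coalgebra.comul := rfl
  have er : conv f (conv g h)
      = LinearMap.mul' k A ∘ₗ TensorProduct.map f (conv g h) ∘ₗ Coalgebra.comul := rfl
  rw [el, er, hA, hB, hC, hD]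
  simp only [LinearMap.comp_assoc]
  rw [← Coalgebra.coassoc]
  simp only [← LinearMap.comp_assoc]
  congr 2
  conv_rhs => rw [LinearMap.comp_assoc, TensorProduct.map_map_comp_assoc_eq]
  rw [mulassoc]
  simp only [LinearMap.comp_assoc]


section RingA

variable {k A : Type*} [Field k] [Ring A] [Bialgebra k A]

/-- Convolution powers of a map, with `Tpow T 0 = e`. -/
noncomputable def Tpow (T : A →ₗ[k] A) : ℕ → (A →ₗ[k] A)
  | 0 => e
  | n + 1 => conv T (Tpow T n)

lemma Tpow_zero (T : A →ₗ[k] A) : Tpow T 0 = e := rfl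

lemma Tpow_succ (T : A →ₗ[k] A) (n : ℕ) : Tpow T (n + 1) = conv T (Tpow T n) := rfl

lemma Tpow_succ' (T : A →ₗ[k] A) (n : ℕ) : Tpow T (n + 1) = conv (Tpow T n) T := by
  induction n with
  | zero => rw [Tpow_succ, Tpow_zero, conv_e_left, conv_e_right]
  | succ n ih => rw [Tpow_succ, ih, ← conv_assoc, ← Tpow_succ, ih]

lemma conv_apply (f g : A →ₗ[k] A) (x : A) :
    conv f g x = LinearMap.mul' k A (TensorProduct.map f g (Coalgebra.comul x)) := rfl

lemma T_one : (LinearMap.id - e : A →ₗ[k] A) 1 = 0 := by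
  simp [e]

lemma Tpow_one_eq_zero (m : ℕ) (hm : 1 ≤ m) :
    Tpow (LinearMap.id - e : A →ₗ[k] A) m 1 = 0 := by
  obtain _ | m := m
  · omega
  rw [Tpow_succ, conv_apply]
  have : Coalgebra.comul (R := k) (1 : A) = (1:A) ⊗ₜ[k] (1:A) := by
    rw [Bialgebra.comul_one, Algebra.TensorProduct.one_def]
  rw [this, TensorProduct.map_tmul, T_one, TensorProduct.zero_tmul, map_zero]

lemma Tpow_vanish (F : ℕ → Submodule k A) (hmono : Monotone F)
    (h0 : F 0 = Submodule.span k {(1 : A)})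
    (hconn : ∀ n, 1 ≤ n → ∀ x ∈ F n,
      Coalgebra.comul (R := k) x - x ⊗ₜ[k] (1 : A) - (1 : A) ⊗ₜ[k] x ∈
        LinearMap.range (TensorProduct.map (F (n - 1)).subtype (F (n - 1)).subtype)) :
    ∀ n m, n < m → ∀ x ∈ F n, Tpow (LinearMap.id - e : A →ₗ[k] A) m x = 0 := by
  set T : A →ₗ[k] A := LinearMap.id - e with hT
  intro n
  induction n with
  | zero =>
    intro m hm x hx
    rw [h0, Submodule.mem_span_singleton] at hx
    obtain ⟨c, rfl⟩ := hx
    obtain _ | m' := m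
    · omega
    rw [Tpow_succ, conv_apply]
    have : Coalgebra.comul (R := k) ((c • 1 : A)) = c • ((1:A) ⊗ₜ[k] (1:A)) := by
      rw [map_smul, Bialgebra.comul_one, Algebra.TensorProduct.one_def]
    have hT1 : T 1 = 0 := T_one
    rw [this, map_smul, TensorProduct.map_tmul, hT1, TensorProduct.zero_tmul, smul_zero,
      map_zero]
  | succ n ih =>
    intro m hm x hx
    obtain _ | m' := m
    · omega
    rw [Tpow_succ, conv_apply]
    obtain ⟨t', ht'⟩ := hconn (n + 1) (Nat.le_add_left 1 n) x hx
    have ht2 : TensorProduct.map (F n).subtype (F n).subtype t'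
        = Coalgebra.comul (R := k) x - x ⊗ₜ[k] (1:A) - (1:A) ⊗ₜ[k] x := ht'
    have hcom : Coalgebra.comul (R := k) x
        = TensorProduct.map (F n).subtype (F n).subtype t' + x ⊗ₜ[k] (1:A) + (1:A) ⊗ₜ[k] x := by
      rw [ht2]; abel
    have hP1 : Tpow T m' 1 = 0 :=
      Tpow_one_eq_zero _ (by omega)
    have hPsub : Tpow T m' ∘ₗ (F n).subtype = 0 := by
      ext z
      exact ih _ (by omega) z z.2
    have hmap : TensorProduct.map T (Tpow T m')
        ∘ₗ TensorProduct.map (F n).subtype (F n).subtype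
        = 0 := by
      rw [← TensorProduct.map_comp, hPsub, TensorProduct.map_zero_right]
    rw [hcom]
    simp only [map_add, TensorProduct.map_tmul]
    have h1 : TensorProduct.map T (Tpow T m')
        (TensorProduct.map (F n).subtype (F n).subtype t') = 0 := by
      rw [← LinearMap.comp_apply, hmap]; rfl
    have hT1 : T 1 = 0 := T_one
    rw [h1, hP1, hT1, TensorProduct.tmul_zero, TensorProduct.zero_tmul]
    simp

/-- Partial sums of the geometric series for the antipode. -/
noncomputable def SN : ℕ → (A →ₗ[k] A) :=
  fun N => ∑ m ∈ Finset.range (N + 1), ((-1 : k) ^ m) • Tpow (LinearMap.id - e) m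

lemma SN_zero : (SN 0 : A →ₗ[k] A) = e := by
  rw [SN, Finset.sum_range_one, Tpow_zero, pow_zero, one_smul]

lemma SN_succ (N : ℕ) :
    (SN (N + 1) : A →ₗ[k] A)
      = SN N + ((-1 : k) ^ (N + 1)) • Tpow (LinearMap.id - e) (N + 1) := by
  rw [SN, Finset.sum_range_succ]; rfl

lemma conv_id_left (X : A →ₗ[k] A) :
    conv LinearMap.id X = X + conv (LinearMap.id - e) X := by
  have : (LinearMap.id : A →ₗ[k] A) = e + (LinearMap.id - e) := by abel
  nth_rewrite 1 [this]
  rw [conv_add_left, conv_e_left]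

lemma conv_id_right (X : A →ₗ[k] A) :
    conv X LinearMap.id = X + conv X (LinearMap.id - e) := by
  have : (LinearMap.id : A →ₗ[k] A) = e + (LinearMap.id - e) := by abel
  nth_rewrite 1 [this]
  rw [conv_add_right, conv_e_right]

lemma telescope_left (N : ℕ) :
    conv LinearMap.id (SN N : A →ₗ[k] A)
      = e + ((-1 : k) ^ N) • Tpow (LinearMap.id - e) (N + 1) := by
  induction N with
  | zero =>
    rw [SN_zero, conv_id_left, Tpow_succ, Tpow_zero]
    norm_num
  | succ N ih =>
    rw [SN_succ, conv_add_right, ih, conv_smul_right, conv_id_left, ← Tpow_succ]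
    have hpow : ((-1 : k) ^ (N + 1)) = -((-1 : k) ^ N) := by ring
    rw [hpow]
    simp only [smul_add, neg_smul]
    module

lemma telescope_right (N : ℕ) :
    conv (SN N : A →ₗ[k] A) LinearMap.id
      = e + ((-1 : k) ^ N) • Tpow (LinearMap.id - e) (N + 1) := by
  induction N with
  | zero =>
    rw [SN_zero, conv_id_right, Tpow_succ', Tpow_zero]
    norm_num
  | succ N ih =>
    rw [SN_succ, conv_add_left, ih, conv_smul_left, conv_id_right, ← Tpow_succ']
    have hpow : ((-1 : k) ^ (N + 1)) = -((-1 : k) ^ N) := by ring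
    rw [hpow]
    simp only [smul_add, neg_smul]
    module

lemma SN_stab (F : ℕ → Submodule k A) (hmono : Monotone F)
    (h0 : F 0 = Submodule.span k {(1 : A)})
    (hconn : ∀ n, 1 ≤ n → ∀ x ∈ F n,
      Coalgebra.comul (R := k) x - x ⊗ₜ[k] (1 : A) - (1 : A) ⊗ₜ[k] x ∈
        LinearMap.range (TensorProduct.map (F (n - 1)).subtype (F (n - 1)).subtype))
    {n N : ℕ} (h : n ≤ N) {x : A} (hx : x ∈ F n) :
    (SN N : A →ₗ[k] A) x = (SN n : A →ₗ[k] A) x := by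
  induction N, h using Nat.le_induction with
  | base => rfl
  | succ N hN ih =>
    rw [SN_succ]
    simp only [LinearMap.add_apply, LinearMap.smul_apply]
    rw [Tpow_vanish F hmono h0 hconn n (N + 1) (by omega) x hx]
    simp [ih]

end RingA

end ConnFilt

/-- every connected filtered bialgebra is a Hopf algebra: if `A` is a
bialgebra over a field `k` with a connected increasing filtration `F` (i.e. `F` is
monotone, `F 0 = k·1`, `⋃ F n = A`, and for every `n ≥ 1` and `x ∈ F n` the element
`Δ(x) − x ⊗ 1 − 1 ⊗ x` lies in the image of `F (n−1) ⊗ F (n−1)` in `A ⊗ A`), then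
there is a linear map `S : A → A` with `S ∗ id = η∘ε = id ∗ S`, where
`f ∗ g = m ∘ (f ⊗ g) ∘ Δ` and `η : k → A`, `λ ↦ λ·1`. -/
theorem connected_filtered_bialgebra_hasAntipode
    {k A : Type*} [Field k] [Ring A] [Bialgebra k A]
    (F : ℕ → Submodule k A) (hmono : Monotone F)
    (h0 : F 0 = Submodule.span k {(1 : A)})
    (hsup : (⨆ n, F n) = ⊤)
    (hconn : ∀ n, 1 ≤ n → ∀ x ∈ F n,
      Coalgebra.comul (R := k) x - x ⊗ₜ[k] (1 : A) - (1 : A) ⊗ₜ[k] x ∈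
        LinearMap.range (TensorProduct.map (F (n - 1)).subtype (F (n - 1)).subtype)) :
    ∃ S : A →ₗ[k] A,
      (LinearMap.mul' k A ∘ₗ TensorProduct.map S LinearMap.id ∘ₗ Coalgebra.comul
          = Algebra.linearMap k A ∘ₗ Coalgebra.counit) ∧
      (LinearMap.mul' k A ∘ₗ TensorProduct.map LinearMap.id S ∘ₗ Coalgebra.comul
          = Algebra.linearMap k A ∘ₗ Coalgebra.counit) := by
  classical
  have hex : ∀ x : A, ∃ n, x ∈ F n := by
    intro x
    have hx : x ∈ ⨆ n, F n := hsup.symm ▸ Submodule.mem_top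
    exact (Submodule.mem_iSup_of_directed F hmono.directed_le).mp hx
  choose d hd using hex
  have key : ∀ (x : A) (n : ℕ), x ∈ F n →
      (ConnFilt.SN (d x) : A →ₗ[k] A) x = (ConnFilt.SN n : A →ₗ[k] A) x := by
    intro x n hx
    have h1 : (ConnFilt.SN (max (d x) n) : A →ₗ[k] A) x = ConnFilt.SN (d x) x :=
      ConnFilt.SN_stab F hmono h0 hconn (le_max_left _ _) (hd x)
    have h2 : (ConnFilt.SN (max (d x) n) : A →ₗ[k] A) x = ConnFilt.SN n x :=
      ConnFilt.SN_stab F hmono h0 hconn (le_max_right _ _) hx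
    rw [← h1, h2]
  let S : A →ₗ[k] A :=
    { toFun := fun x => ConnFilt.SN (d x) x
      map_add' := by
        intro x y
        set n := max (max (d x) (d y)) (d (x + y)) with hn
        have hx : x ∈ F n := hmono (le_trans (le_max_left _ _) (le_max_left _ _)) (hd x)
        have hy : y ∈ F n := hmono (le_trans (le_max_right _ _) (le_max_left _ _)) (hd y)
        have hxy : x + y ∈ F n := (F n).add_mem hx hy
        rw [key (x + y) n hxy, key x n hx, key y n hy, map_add]
      map_smul' := by
        intro c x
        have hcx : c • x ∈ F (d x) := (F (d x)).smul_mem c (hd x)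
        rw [RingHom.id_apply, key (c • x) (d x) hcx, map_smul] }
  have hS : ∀ (n : ℕ) (x : A), x ∈ F n → S x = (ConnFilt.SN n : A →ₗ[k] A) x :=
    fun n x hx => key x n hx
  have h1mem : ∀ N : ℕ, (1 : A) ∈ F N := by
    intro N
    refine hmono (Nat.zero_le N) ?_
    rw [h0]
    exact Submodule.mem_span_singleton_self 1
  -- the decomposition of `comul x` at level `N := d x + 1`
  refine ⟨S, ?_, ?_⟩
  · ext x
    set N := d x + 1 with hN
    have hxN : x ∈ F N := hmono (Nat.le_succ _) (hd x)
    obtain ⟨t', ht'⟩ := hconn N (by omega) x hxN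
    have ht2 : TensorProduct.map (F (d x)).subtype (F (d x)).subtype t'
        = Coalgebra.comul (R := k) x - x ⊗ₜ[k] (1:A) - (1:A) ⊗ₜ[k] x := ht'
    have hle : F (d x) ≤ F N := hmono (Nat.le_succ _)
    set u : (F N) ⊗[k] (F N) :=
      TensorProduct.map (Submodule.inclusion hle) (Submodule.inclusion hle) t'
        + (⟨x, hxN⟩ : F N) ⊗ₜ[k] (⟨1, h1mem N⟩ : F N)
        + (⟨1, h1mem N⟩ : F N) ⊗ₜ[k] (⟨x, hxN⟩ : F N) with hu
    have hcompsub : TensorProduct.map (F N).subtype (F N).subtype ∘ₗ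
        TensorProduct.map (Submodule.inclusion hle) (Submodule.inclusion hle)
        = TensorProduct.map (F (d x)).subtype (F (d x)).subtype := by
      rw [← TensorProduct.map_comp, Submodule.subtype_comp_inclusion]
    have humap : TensorProduct.map (F N).subtype (F N).subtype u
        = Coalgebra.comul (R := k) x := by
      rw [hu]
      simp only [map_add, TensorProduct.map_tmul, ← LinearMap.comp_apply, hcompsub]
      simp only [LinearMap.comp_apply, ht2, Submodule.coe_subtype]
      abel
    have hScomp : TensorProduct.map S LinearMap.id ∘ₗ
        TensorProduct.map (F N).subtype (F N).subtype
        = TensorProduct.map (ConnFilt.SN N) LinearMap.id ∘ₗ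
          TensorProduct.map (F N).subtype (F N).subtype := by
      rw [← TensorProduct.map_comp, ← TensorProduct.map_comp]
      congr 1
      ext z
      exact hS N z z.2
    have step1 : (LinearMap.mul' k A ∘ₗ TensorProduct.map S LinearMap.id ∘ₗ
        Coalgebra.comul) x
        = ConnFilt.conv (ConnFilt.SN N : A →ₗ[k] A) LinearMap.id x := by
      have hcon := DFunLike.congr_fun hScomp u
      simp only [LinearMap.comp_apply] at hcon
      rw [ConnFilt.conv_apply]
      simp only [LinearMap.comp_apply]
      rw [← humap, hcon]
    rw [step1, ConnFilt.telescope_right]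
    have hvan : ConnFilt.Tpow (LinearMap.id - ConnFilt.e : A →ₗ[k] A) (N + 1) x = 0 :=
      ConnFilt.Tpow_vanish F hmono h0 hconn N (N + 1) (by omega) x hxN
    simp only [LinearMap.add_apply, LinearMap.smul_apply, hvan, smul_zero, add_zero]
    rfl
  · ext x
    set N := d x + 1 with hN
    have hxN : x ∈ F N := hmono (Nat.le_succ _) (hd x)
    obtain ⟨t', ht'⟩ := hconn N (by omega) x hxN
    have ht2 : TensorProduct.map (F (d x)).subtype (F (d x)).subtype t'
        = Coalgebra.comul (R := k) x - x ⊗ₜ[k] (1:A) - (1:A) ⊗ₜ[k] x := ht'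
    have hle : F (d x) ≤ F N := hmono (Nat.le_succ _)
    set u : (F N) ⊗[k] (F N) :=
      TensorProduct.map (Submodule.inclusion hle) (Submodule.inclusion hle) t'
        + (⟨x, hxN⟩ : F N) ⊗ₜ[k] (⟨1, h1mem N⟩ : F N)
        + (⟨1, h1mem N⟩ : F N) ⊗ₜ[k] (⟨x, hxN⟩ : F N) with hu
    have hcompsub : TensorProduct.map (F N).subtype (F N).subtype ∘ₗ
        TensorProduct.map (Submodule.inclusion hle) (Submodule.inclusion hle)
        = TensorProduct.map (F (d x)).subtype (F (d x)).subtype := by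
      rw [← TensorProduct.map_comp, Submodule.subtype_comp_inclusion]
    have humap : TensorProduct.map (F N).subtype (F N).subtype u
        = Coalgebra.comul (R := k) x := by
      rw [hu]
      simp only [map_add, TensorProduct.map_tmul, ← LinearMap.comp_apply, hcompsub]
      simp only [LinearMap.comp_apply, ht2, Submodule.coe_subtype]
      abel
    have hScomp : TensorProduct.map LinearMap.id S ∘ₗ
        TensorProduct.map (F N).subtype (F N).subtype
        = TensorProduct.map LinearMap.id (ConnFilt.SN N) ∘ₗ
          TensorProduct.map (F N).subtype (F N).subtype := by
      rw [← TensorProduct.map_comp, ← TensorProduct.map_comp]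
      congr 1
      ext z
      exact hS N z z.2
    have step1 : (LinearMap.mul' k A ∘ₗ TensorProduct.map LinearMap.id S ∘ₗ
        Coalgebra.comul) x
        = ConnFilt.conv LinearMap.id (ConnFilt.SN N : A →ₗ[k] A) x := by
      have hcon := DFunLike.congr_fun hScomp u
      simp only [LinearMap.comp_apply] at hcon
      rw [ConnFilt.conv_apply]
      simp only [LinearMap.comp_apply]
      rw [← humap, hcon]
    rw [step1, ConnFilt.telescope_left]
    have hvan : ConnFilt.Tpow (LinearMap.id - ConnFilt.e : A →ₗ[k] A) (N + 1) x = 0 :=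
      ConnFilt.Tpow_vanish F hmono h0 hconn N (N + 1) (by omega) x hxN
    simp only [LinearMap.add_apply, LinearMap.smul_apply, hvan, smul_zero, add_zero]
    rfl
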